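/- arXiv:2305.05107 — 5 statements merged into one kernel-verified Lean document; each statement's English description precedes it below -/
import Mathlib

section
/- Let W̄ be an N×N real matrix (N ≥ 1) with nonnegative entries and zero diagonal, representing the weighted adjacency matrix of a directed graph whose edge relation [i,j] (meaning W̄_{i,j} > 0) is acyclic (no directed cycle). Let D̄ be the diagonal in-degree matrix with D̄_{i,i} = Σ_j W̄_{j,i}, and let L̄ = D̄ − W̄ᵀ be the directed graph Laplacian. Then every complex eigenvalue of L̄ (viewed as a matrix over ℂ) is a real, nonnegative number. -/
open Matrix Finset

/-- For the directed graph Laplacian `L̄ = D̄ - W̄ᵀ` of a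
directed acyclic graph with nonnegative adjacency matrix `W̄` (zero diagonal,
acyclic positivity relation), every complex eigenvalue of `L̄` is a real,
nonnegative number. -/
theorem dag_laplacian_eigenvalues_real_nonneg
    (N : ℕ) (hN : 1 ≤ N) (W : Matrix (Fin N) (Fin N) ℝ)
    (hnonneg : ∀ i j, 0 ≤ W i j) (hdiag : ∀ i, W i i = 0)
    (hacyclic : ∀ i, ¬ Relation.TransGen (fun a b => 0 < W a b) i i)
    (L : Matrix (Fin N) (Fin N) ℝ)
    (hL : L = Matrix.diagonal (fun i => ∑ j, W j i) - Wᵀ) :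
    ∀ μ : ℂ, μ ∈ spectrum ℂ (L.map (algebraMap ℝ ℂ)) →
      ∃ r : ℝ, 0 ≤ r ∧ μ = (r : ℂ) := by
  intro μ hμ
  classical
  set r : Fin N → Fin N → Prop := fun a b => 0 < W a b with hr
  -- rank function
  set ρ : Fin N → ℕ := fun i => (univ.filter (fun j => Relation.TransGen r j i)).card with hρdef
  have hρ : ∀ a b, r a b → ρ a < ρ b := by
    intro a b hab
    apply Finset.card_lt_card
    constructor
    · intro j hj
      simp only [mem_filter, mem_univ, true_and] at hj ⊢
      exact hj.tail hab
    · intro hsub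
      have ha : a ∈ univ.filter (fun j => Relation.TransGen r j b) := by
        simp only [mem_filter, mem_univ, true_and]
        exact Relation.TransGen.single hab
      have := hsub ha
      simp only [mem_filter, mem_univ, true_and] at this
      exact hacyclic a this
  -- injective block index
  set b : Fin N → ℤ := fun i => -((ρ i : ℤ) * N + i) with hbdef
  have hbinj : Function.Injective b := by
    intro i j hij
    have h1 : ρ i * N + (i : ℕ) = ρ j * N + (j : ℕ) := by
      simp only [hbdef, neg_inj] at hij
      exact_mod_cast hij
    have h2 : (i : ℕ) = (j : ℕ) := by
      have h3 := congrArg (· % N) h1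
      simp only [Nat.mul_add_mod'] at h3
      rwa [Nat.mod_eq_of_lt i.2, Nat.mod_eq_of_lt j.2] at h3
    exact Fin.ext h2
  have hblt : ∀ i j : Fin N, ρ j < ρ i → b i < b j := by
    intro i j h
    simp only [hbdef, neg_lt_neg_iff]
    have hi : (i : ℤ) < N := by exact_mod_cast i.2
    have hj : (j : ℤ) < N := by exact_mod_cast j.2
    have : (ρ j : ℤ) + 1 ≤ ρ i := by exact_mod_cast h
    have hNn : (0:ℤ) ≤ N := by positivity
    have hin : (0:ℤ) ≤ (i : ℕ) := by positivity
    nlinarith [mul_le_mul_of_nonneg_right this hNn]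
  set Mc : Matrix (Fin N) (Fin N) ℂ := L.map (algebraMap ℝ ℂ) with hMc
  set A : Matrix (Fin N) (Fin N) ℂ :=
    algebraMap ℂ (Matrix (Fin N) (Fin N) ℂ) μ - Mc with hA
  -- off-diagonal structure of L
  have hLoff : ∀ i j : Fin N, i ≠ j → L i j = -(W j i) := by
    intro i j hij
    simp [hL, Matrix.diagonal_apply_ne _ hij, Matrix.transpose_apply]
  have hAoff : ∀ i j : Fin N, i ≠ j → A i j = (W j i : ℂ) := by
    intro i j hij
    simp [hA, hMc, Matrix.algebraMap_matrix_apply, hij, Matrix.map_apply, hLoff i j hij]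
  have htri : A.BlockTriangular b := by
    intro i j hlt
    have hij : i ≠ j := by rintro rfl; exact lt_irrefl _ hlt
    rw [hAoff i j hij]
    by_contra hne
    have hW0 : W j i ≠ 0 := fun h => hne (by simp [h])
    have hW : 0 < W j i := lt_of_le_of_ne (hnonneg j i) (Ne.symm hW0)
    exact absurd hlt (not_lt.mpr (le_of_lt (hblt i j (hρ j i hW))))
  -- determinant computation
  have hdet : A.det = ∏ i, A i i := by
    rw [htri.det]
    rw [Finset.prod_image (fun x _ y _ h => hbinj h)]
    apply Finset.prod_congr rfl
    intro i _
    haveI : Unique { a // b a = b i } :=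
      ⟨⟨⟨i, rfl⟩⟩, fun a => Subtype.ext (hbinj a.2)⟩
    rw [Matrix.det_unique]
    simp only [Matrix.toSquareBlock_def, Matrix.submatrix_apply, Matrix.of_apply]
    rw [show ((default : {a // b a = b i}) : Fin N) = i from
      congrArg Subtype.val (Unique.eq_default (⟨i, rfl⟩ : {a // b a = b i})).symm]
  have hdiagA : ∀ i : Fin N, A i i = μ - ((∑ j, W j i : ℝ) : ℂ) := by
    intro i
    have hLii : L i i = ∑ j, W j i := by
      simp [hL, Matrix.diagonal_apply_eq, Matrix.transpose_apply, hdiag i]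
    simp [hA, hMc, Matrix.algebraMap_matrix_apply, Matrix.map_apply, hLii,
      Complex.coe_algebraMap]
  -- from spectrum membership, det A = 0
  rw [spectrum.mem_iff] at hμ
  have hdet0 : A.det = 0 := by
    by_contra h
    exact hμ ((Matrix.isUnit_iff_isUnit_det A).mpr (isUnit_iff_ne_zero.mpr h))
  rw [hdet] at hdet0
  obtain ⟨i, _, hi⟩ := Finset.prod_eq_zero_iff.mp hdet0
  rw [hdiagA i, sub_eq_zero] at hi
  exact ⟨∑ j, W j i, Finset.sum_nonneg (fun j _ => hnonneg j i), hi⟩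
end

section
/- Let W̄ be an N×N real matrix with nonnegative entries and zero diagonal whose positivity relation (W̄_{i,j} > 0 meaning a directed edge from i to j) is acyclic, let D̄ be the diagonal matrix with D̄_{i,i} = Σ_j W̄_{j,i}, and let L̄ = D̄ − W̄ᵀ. Then the multiset of eigenvalues of L̄, counted with algebraic multiplicity (i.e., the roots of its characteristic polynomial over ℂ), equals the multiset of weighted in-degrees {D̄_{i,i} : i = 1,…,N}. -/
open Matrix

/-- For the directed graph Laplacian `L̄ = D̄ - W̄ᵀ` of a DAG
with nonnegative adjacency matrix `W̄` (zero diagonal, acyclic positivity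
relation), the multiset of eigenvalues of `L̄` counted with algebraic
multiplicity (the roots of its characteristic polynomial over `ℂ`) equals the
multiset of weighted in-degrees `{D̄_{i,i}}`. -/
theorem dag_laplacian_eigenvalues_eq_indegrees
    (N : ℕ) (W : Matrix (Fin N) (Fin N) ℝ)
    (hnonneg : ∀ i j, 0 ≤ W i j) (hdiag : ∀ i, W i i = 0)
    (hacyclic : ∀ i, ¬ Relation.TransGen (fun a b => 0 < W a b) i i)
    (L : Matrix (Fin N) (Fin N) ℝ)
    (hL : L = Matrix.diagonal (fun i => ∑ j, W j i) - Wᵀ) :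
    (Matrix.charpoly (L.map (algebraMap ℝ ℂ))).roots
      = Multiset.map (fun i => ((∑ j, W j i : ℝ) : ℂ)) Finset.univ.val := by
  classical
  set r : Fin N → Fin N → Prop := fun a b => 0 < W a b with hr
  set q : Fin N → Fin N → Prop := Relation.ReflTransGen r with hq
  haveI hpo : IsPartialOrder (Fin N) q :=
    { refl := fun a => Relation.ReflTransGen.refl
      trans := fun a b c hab hbc => hab.trans hbc
      antisymm := by
        intro a b hab hba
        by_contra hne
        rcases Relation.reflTransGen_iff_eq_or_transGen.1 hab with h | h
        · exact hne h.symm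
        rcases Relation.reflTransGen_iff_eq_or_transGen.1 hba with h' | h'
        · exact hne h'
        exact hacyclic a (h.trans h') }
  obtain ⟨s, hlin, hrs⟩ := extend_partialOrder q
  haveI := hlin
  -- rank function
  have hNpos : ∀ (i : Fin N), (Finset.univ.filter (fun j => s j i ∧ j ≠ i)).card < N := by
    intro i
    calc (Finset.univ.filter (fun j => s j i ∧ j ≠ i)).card
        ≤ (Finset.univ.erase i).card := by
          apply Finset.card_le_card
          intro k hk
          simp only [Finset.mem_filter] at hk
          exact Finset.mem_erase.2 ⟨hk.2.2, Finset.mem_univ k⟩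
      _ < Finset.univ.card := Finset.card_erase_lt_of_mem (Finset.mem_univ i)
      _ = N := by simp
  set b : Fin N → Fin N := fun i => ⟨_, hNpos i⟩ with hb
  have hmono : ∀ i j, s i j → i ≠ j → b i < b j := by
    intro i j hij hne
    have hss : (Finset.univ.filter (fun k => s k i ∧ k ≠ i))
        ⊂ (Finset.univ.filter (fun k => s k j ∧ k ≠ j)) := by
      constructor
      · intro k hk
        simp only [Finset.mem_filter] at hk ⊢
        refine ⟨Finset.mem_univ k, IsTrans.trans _ _ _ hk.2.1 hij, ?_⟩
        rintro rfl
        exact hne (Std.Antisymm.antisymm _ _ hij hk.2.1)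
      · intro hsub
        have : i ∈ (Finset.univ.filter (fun k => s k i ∧ k ≠ i)) :=
          hsub (by simp [hij, hne])
        simp at this
    exact Finset.card_lt_card hss
  have hinj : Function.Injective b := by
    intro i j hbij
    by_contra hne
    rcases Std.Total.total (r := s) i j with h | h
    · exact absurd hbij (ne_of_lt (hmono i j h hne))
    · exact absurd hbij.symm (ne_of_lt (hmono j i h (Ne.symm hne)))
  set e : Fin N ≃ Fin N :=
    (Equiv.ofBijective b (Finite.injective_iff_bijective.1 hinj)).trans (Fin.revPerm) with he
  set M : Matrix (Fin N) (Fin N) ℂ := L.map (algebraMap ℝ ℂ) with hM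
  have hMoff : ∀ p p' : Fin N, p ≠ p' → M p p' ≠ 0 → e p < e p' := by
    intro p p' hne hMne
    have hW : 0 < W p' p := by
      rcases lt_or_eq_of_le (hnonneg p' p) with h | h
      · exact h
      · exfalso
        apply hMne
        simp [hM, hL, Matrix.diagonal_apply_ne _ hne, ← h]
    have hrq : r p' p := hW
    have hne' : p' ≠ p := by
      rintro rfl; exact hacyclic p' (Relation.TransGen.single hrq)
    have hs : s p' p := hrs _ _ (Relation.ReflTransGen.single hrq)
    have : b p' < b p := hmono _ _ hs hne'
    simpa [he, Equiv.trans_apply, Fin.rev_lt_rev] using this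
  have ht : (Matrix.reindex e e M).BlockTriangular id := by
    intro i j hij
    simp only [Matrix.reindex_apply, Matrix.submatrix_apply]
    by_contra hne0
    have hpq : e.symm i ≠ e.symm j := by
      intro h; exact absurd (e.symm.injective.eq_iff.1 h).symm (ne_of_lt hij)
    have := hMoff _ _ hpq hne0
    simp only [Equiv.apply_symm_apply] at this
    exact lt_irrefl i (lt_trans this hij)
  have hcp : M.charpoly = ∏ i : Fin N, (Polynomial.X -
      Polynomial.C (((∑ j, W j (e.symm i) : ℝ) : ℂ))) := by
    rw [← Matrix.charpoly_reindex e, Matrix.charpoly_of_upperTriangular _ ht]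
    refine Finset.prod_congr rfl fun i _ => ?_
    congr 1
    have hd : L (e.symm i) (e.symm i) = ∑ j, W j (e.symm i) := by
      simp [hL, Matrix.diagonal_apply_eq, Matrix.transpose_apply, hdiag]
    simp [hM, hd]
  rw [hcp]
  have : (∏ i : Fin N, (Polynomial.X -
      Polynomial.C (((∑ j, W j (e.symm i) : ℝ) : ℂ))))
      = ((Finset.univ.val.map (fun i : Fin N => ((∑ j, W j (e.symm i) : ℝ) : ℂ))).map
          (fun a => Polynomial.X - Polynomial.C a)).prod := by
    rw [Multiset.map_map]
    rfl
  rw [this, Polynomial.roots_multiset_prod_X_sub_C]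
  have huniv : Finset.univ.val.map e.symm = Finset.univ.val := by
    have := Finset.map_univ_equiv e.symm
    calc Finset.univ.val.map e.symm = (Finset.univ.map e.symm.toEmbedding).val := by
          rw [Finset.map_val]; rfl
      _ = Finset.univ.val := by rw [this]
  calc Finset.univ.val.map (fun i : Fin N => ((∑ j, W j (e.symm i) : ℝ) : ℂ))
      = (Finset.univ.val.map e.symm).map (fun i : Fin N => ((∑ j, W j i : ℝ) : ℂ)) := by
        rw [Multiset.map_map]; rfl
    _ = _ := by rw [huniv]
end

section
/- Let W̄ be the nonnegative adjacency matrix (zero diagonal, acyclic edge relation) of a DAG on N nodes with a lone source node s: node s has no incoming edge (W̄_{j,s} = 0 for all j), and every node i ≠ s is reachable from s by a directed path of edges with positive weight. Let L̄ = D̄ − W̄ᵀ with D̄_{i,i} = Σ_j W̄_{j,i}. Then 0 is an eigenvalue of L̄ with algebraic multiplicity exactly 1, and every other eigenvalue of L̄ (over ℂ) is a strictly positive real number. -/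
open Matrix Polynomial Finset

/-- For the directed graph Laplacian `L̄ = D̄ - W̄ᵀ` of a DAG
with a lone source node `s` (no incoming edges at `s`, every other node
reachable from `s` via a directed path of positive-weight edges), `0` is an
eigenvalue of `L̄` with algebraic multiplicity exactly `1`, and every other
eigenvalue of `L̄` over `ℂ` is a strictly positive real number. -/
theorem dag_laplacian_zero_simple_others_positive
    (N : ℕ) (W : Matrix (Fin N) (Fin N) ℝ)
    (hnonneg : ∀ i j, 0 ≤ W i j) (hdiag : ∀ i, W i i = 0)
    (hacyclic : ∀ i, ¬ Relation.TransGen (fun a b => 0 < W a b) i i)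
    (s : Fin N) (hsource : ∀ j, W j s = 0)
    (hreach : ∀ i, i ≠ s → Relation.ReflTransGen (fun a b => 0 < W a b) s i)
    (L : Matrix (Fin N) (Fin N) ℝ)
    (hL : L = Matrix.diagonal (fun i => ∑ j, W j i) - Wᵀ) :
    (Matrix.charpoly (L.map (algebraMap ℝ ℂ))).roots.count 0 = 1 ∧
    ∀ μ ∈ (Matrix.charpoly (L.map (algebraMap ℝ ℂ))).roots,
      μ ≠ 0 → ∃ r : ℝ, 0 < r ∧ μ = (r : ℂ) := by
  classical
  set r : Fin N → Fin N → Prop := fun a b => 0 < W a b with hr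
  set d : Fin N → ℝ := fun i => ∑ j, W j i with hd
  set dc : Fin N → ℂ := fun i => ((d i : ℝ) : ℂ) with hdc
  set b : Fin N → ℕ := fun i => (Finset.univ.filter (fun j => Relation.TransGen r j i)).card
    with hbdef
  have hmono : ∀ i j, Relation.TransGen r i j → b i < b j := by
    intro i j h
    apply Finset.card_lt_card
    constructor
    · intro k hk
      simp only [Finset.mem_filter, Finset.mem_univ, true_and] at *
      exact hk.trans h
    · intro hsub
      have hi : i ∈ Finset.univ.filter (fun k => Relation.TransGen r k i) :=
        hsub (by simp [h])
      simp only [Finset.mem_filter, Finset.mem_univ, true_and] at hi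
      exact hacyclic i hi
  have hedge : ∀ i j, 0 < W i j → b i < b j := fun i j h =>
    hmono i j (Relation.TransGen.single h)
  -- entries of L
  have hLod : ∀ i j, i ≠ j → L i j = -(W j i) := by
    intro i j hij
    simp [hL, Matrix.diagonal_apply_ne _ hij, Matrix.sub_apply, Matrix.transpose_apply]
  have hLd : ∀ i, L i i = d i := by
    intro i
    simp [hL, Matrix.sub_apply, Matrix.transpose_apply, hdiag i, hd]
  set Lc : Matrix (Fin N) (Fin N) ℂ := L.map (algebraMap ℝ ℂ) with hLc
  set b' : Fin N → ℕᵒᵈ := fun i => OrderDual.toDual (b i) with hb'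
  have hBT : (Matrix.charmatrix Lc).BlockTriangular b' := by
    intro i j hlt
    have hblt : b i < b j := hlt
    have hij : i ≠ j := by rintro rfl; exact lt_irrefl _ hblt
    have hW : W j i = 0 := by
      by_contra h
      have : 0 < W j i := lt_of_le_of_ne (hnonneg j i) (Ne.symm h)
      exact absurd (hedge j i this) (by omega)
    rw [Matrix.charmatrix_apply_ne _ _ _ hij]
    simp [hLc, Matrix.map_apply, hLod i j hij, hW]
  have hblock : ∀ a : ℕᵒᵈ, ((Matrix.charmatrix Lc).toSquareBlock b' a) =
      Matrix.diagonal (fun i : {i // b' i = a} => (X : ℂ[X]) - C (dc i.1)) := by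
    intro a
    ext ⟨i, hi⟩ ⟨j, hj⟩
    by_cases hij : i = j
    · subst hij
      simp [Matrix.toSquareBlock_def, Matrix.charmatrix_apply_eq, Matrix.diagonal_apply_eq,
        hLc, Matrix.map_apply, hLd i, hdc]
    · have hW : W j i = 0 := by
        by_contra h
        have : 0 < W j i := lt_of_le_of_ne (hnonneg j i) (Ne.symm h)
        have := hedge j i this
        have : b i = b j := by
          have := hi.trans hj.symm
          exact congrArg OrderDual.ofDual this
        omega
      have hne : (⟨i, hi⟩ : {i // b' i = a}) ≠ ⟨j, hj⟩ := by
        simp [Subtype.ext_iff, hij]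
      rw [Matrix.diagonal_apply_ne _ hne]
      simp [Matrix.toSquareBlock_def, Matrix.charmatrix_apply_ne _ _ _ hij,
        hLc, Matrix.map_apply, hLod i j hij, hW]
  have hcp : Matrix.charpoly Lc = ∏ i : Fin N, ((X : ℂ[X]) - C (dc i)) := by
    rw [Matrix.charpoly, hBT.det]
    have : ∀ a ∈ Finset.univ.image b',
        ((Matrix.charmatrix Lc).toSquareBlock b' a).det
          = ∏ i ∈ Finset.univ.filter (fun i => b' i = a), ((X : ℂ[X]) - C (dc i)) := by
      intro a _
      rw [hblock a, Matrix.det_diagonal]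
      exact (Finset.prod_subtype (Finset.univ.filter (fun i => b' i = a))
        (fun x => by simp) (fun i => (X : ℂ[X]) - C (dc i))).symm
    rw [Finset.prod_congr rfl this]
    exact Finset.prod_fiberwise_of_maps_to (fun i _ => Finset.mem_image_of_mem b' (Finset.mem_univ i)) _
  have hroots : (Matrix.charpoly Lc).roots = Multiset.map dc Finset.univ.val := by
    rw [hcp]
    rw [Finset.prod_eq_multiset_prod]
    have := Polynomial.roots_multiset_prod_X_sub_C (Multiset.map dc Finset.univ.val)
    rw [Multiset.map_map] at this
    exact this
  -- positivity of d off s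
  have hds : d s = 0 := by simp [hd, hsource]
  have hdpos : ∀ i, i ≠ s → 0 < d i := by
    intro i hi
    obtain h | ⟨c, _, hc⟩ := (hreach i hi).cases_tail
    · exact absurd h hi
    · have h1 : 0 < W c i := hc
      have h2 : W c i ≤ d i :=
        Finset.single_le_sum (fun j _ => hnonneg j i) (Finset.mem_univ c)
      linarith
  constructor
  · rw [hroots, Multiset.count_map]
    have : Multiset.filter (fun i => (0:ℂ) = dc i) Finset.univ.val
        = (Finset.univ.filter (fun i => (0:ℂ) = dc i)).val := by
      simp [Finset.filter_val]
    rw [this]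
    have heq : Finset.univ.filter (fun i => (0:ℂ) = dc i) = {s} := by
      ext i
      simp only [Finset.mem_filter, Finset.mem_univ, true_and, Finset.mem_singleton]
      constructor
      · intro h
        by_contra hne
        have : d i = 0 := by
          have := h.symm
          simpa [hdc, Complex.ofReal_eq_zero] using this
        exact absurd this (ne_of_gt (hdpos i hne))
      · rintro rfl
        simp [hdc, hds]
    rw [heq]
    simp
  · intro μ hμ hμne
    rw [hroots] at hμ
    obtain ⟨i, _, rfl⟩ := Multiset.mem_map.mp hμ
    refine ⟨d i, ?_, rfl⟩
    have hine : i ≠ s := by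
      rintro rfl
      exact hμne (by simp [hdc, hds])
    exact hdpos i hine
end

section
/- Let W̄ be the nonnegative adjacency matrix (zero diagonal, acyclic positivity relation) of a DAG on N nodes with a lone source node s (s has no incoming edges and every other node is reachable from s by a directed path of positive-weight edges), let L̄ = D̄ − W̄ᵀ with D̄_{i,i} = Σ_j W̄_{j,i}, and let γ > 0. Then the DAG diffusion x(t) = exp(−γ t L̄) δ_s, which solves dx/dt = −γ L̄ x with initial condition x(0) = δ_s, converges to the all-ones vector: lim_{t→∞} exp(−γ t L̄) δ_s = 𝟙. -/
open Matrix Filter Real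


/-- If `F' ≥ 0` on `[T, ∞)` then `F T ≤ F t` for `t ≥ T`. -/
lemma mono_from_deriv (F F' : ℝ → ℝ) (hF : ∀ t, HasDerivAt F (F' t) t) (T : ℝ)
    (h : ∀ t ≥ T, 0 ≤ F' t) : ∀ t ≥ T, F T ≤ F t := by
  have hdiff : Differentiable ℝ F := fun u => (hF u).differentiableAt
  have hmono : MonotoneOn F (Set.Ici T) := by
    apply monotoneOn_of_deriv_nonneg (convex_Ici T) hdiff.continuous.continuousOn
      (fun u _ => (hdiff u).differentiableWithinAt)
    intro u hu
    rw [interior_Ici] at hu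
    rw [(hF u).deriv]
    exact h u (le_of_lt hu)
  exact fun t ht => hmono (Set.self_mem_Ici) ht ht

/-- If `f' = -λ f + g` with `λ > 0` and `g → λ c` at infinity, then `f → c`. -/
lemma ode_tendsto (lam c : ℝ) (hlam : 0 < lam) (f g : ℝ → ℝ)
    (hf : ∀ t, HasDerivAt f (-lam * f t + g t) t)
    (hg : Filter.Tendsto g Filter.atTop (nhds (lam * c))) :
    Filter.Tendsto f Filter.atTop (nhds c) := by
  set w : ℝ → ℝ := fun t => Real.exp (lam * t) * (f t - c) with hw_def
  have hexp : ∀ u : ℝ, HasDerivAt (fun t => Real.exp (lam * t)) (lam * Real.exp (lam * u)) u := by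
    intro u
    simpa [mul_comm, Function.comp_def] using (Real.hasDerivAt_exp (lam * u)).comp u
      ((hasDerivAt_id u).const_mul lam)
  have hw : ∀ t, HasDerivAt w (Real.exp (lam * t) * (g t - lam * c)) t := by
    intro t
    have h2 : HasDerivAt (fun t => f t - c) (-lam * f t + g t) t := (hf t).sub_const c
    have : HasDerivAt (fun t => Real.exp (lam * t) * (f t - c))
        (lam * Real.exp (lam * t) * (f t - c) + Real.exp (lam * t) * (-lam * f t + g t)) t :=
      (hexp t).mul h2
    convert this using 1
    ring
  have key : Filter.Tendsto (fun t => f t - c) Filter.atTop (nhds 0) := by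
    rw [NormedAddCommGroup.tendsto_nhds_zero]
    intro ε hε
    set δ : ℝ := lam * ε / 2 with hδ_def
    have hδ : 0 < δ := by positivity
    obtain ⟨T, hT⟩ : ∃ T, ∀ t ≥ T, |g t - lam * c| ≤ δ := by
      have := hg.eventually (Metric.closedBall_mem_nhds (lam * c) hδ)
      rw [Filter.eventually_atTop] at this
      obtain ⟨T, hT⟩ := this
      exact ⟨T, fun t ht => by simpa [Real.dist_eq] using hT t ht⟩
    -- upper bound for w
    have hub : ∀ t ≥ T, w t - w T ≤ δ / lam * Real.exp (lam * t) := by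
      have := mono_from_deriv (fun t => δ / lam * Real.exp (lam * t) - w t)
        (fun t => δ / lam * (lam * Real.exp (lam * t)) - Real.exp (lam * t) * (g t - lam * c))
        (fun t => ((hexp t).const_mul (δ / lam)).sub (hw t)) T ?_
      · intro t ht
        have h := this t ht
        have hTe : 0 ≤ δ / lam * Real.exp (lam * T) := by positivity
        nlinarith [h]
      · intro t ht
        have h1 := hT t ht
        have h2 : g t - lam * c ≤ δ := (abs_le.mp h1).2
        have h3 : (0:ℝ) < Real.exp (lam * t) := Real.exp_pos _
        have heq : δ / lam * (lam * Real.exp (lam * t)) = δ * Real.exp (lam * t) := by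
          field_simp
        show 0 ≤ δ / lam * (lam * Real.exp (lam * t)) - Real.exp (lam * t) * (g t - lam * c)
        rw [heq]
        nlinarith
    have hlb : ∀ t ≥ T, w T - w t ≤ δ / lam * Real.exp (lam * t) := by
      have := mono_from_deriv (fun t => δ / lam * Real.exp (lam * t) + w t)
        (fun t => δ / lam * (lam * Real.exp (lam * t)) + Real.exp (lam * t) * (g t - lam * c))
        (fun t => ((hexp t).const_mul (δ / lam)).add (hw t)) T ?_
      · intro t ht
        have h := this t ht
        have hTe : 0 ≤ δ / lam * Real.exp (lam * T) := by positivity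
        nlinarith [h]
      · intro t ht
        have h1 := hT t ht
        have h2 : -δ ≤ g t - lam * c := (abs_le.mp h1).1
        have h3 : (0:ℝ) < Real.exp (lam * t) := Real.exp_pos _
        have heq : δ / lam * (lam * Real.exp (lam * t)) = δ * Real.exp (lam * t) := by
          field_simp
        show 0 ≤ δ / lam * (lam * Real.exp (lam * t)) + Real.exp (lam * t) * (g t - lam * c)
        rw [heq]
        nlinarith
    -- hence |f t - c| ≤ exp(-lam t) |w T| + δ/lam
    have hbound : ∀ t ≥ T, |f t - c| ≤ Real.exp (-(lam * t)) * |w T| + δ / lam := by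
      intro t ht
      have h3 : (0:ℝ) < Real.exp (lam * t) := Real.exp_pos _
      have hwabs : |w t| ≤ |w T| + δ / lam * Real.exp (lam * t) := by
        have h1 := hub t ht
        have h2 := hlb t ht
        rw [abs_le]
        constructor
        · linarith [neg_abs_le (w T)]
        · linarith [le_abs_self (w T)]
      have hfc : f t - c = Real.exp (-(lam * t)) * w t := by
        rw [hw_def]
        simp only []
        rw [Real.exp_neg]
        field_simp
      rw [hfc, abs_mul, abs_of_pos (Real.exp_pos _)]
      have hen : (0:ℝ) < Real.exp (-(lam * t)) := Real.exp_pos _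
      calc Real.exp (-(lam * t)) * |w t|
          ≤ Real.exp (-(lam * t)) * (|w T| + δ / lam * Real.exp (lam * t)) := by
            exact mul_le_mul_of_nonneg_left hwabs (le_of_lt hen)
        _ = Real.exp (-(lam * t)) * |w T| + δ / lam * (Real.exp (-(lam * t)) * Real.exp (lam * t)) := by ring
        _ = Real.exp (-(lam * t)) * |w T| + δ / lam := by
            rw [← Real.exp_add]; simp
    -- finish
    have hδlam : δ / lam = ε / 2 := by
      rw [hδ_def]; field_simp
    have htend : Filter.Tendsto (fun t => Real.exp (-(lam * t)) * |w T|) Filter.atTop (nhds 0) := by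
      have : Filter.Tendsto (fun t : ℝ => -(lam * t)) Filter.atTop Filter.atBot := by
        exact tendsto_neg_atTop_atBot.comp (tendsto_id.const_mul_atTop hlam)
      simpa using (Real.tendsto_exp_atBot.comp this).mul_const |w T|
    have hev1 : ∀ᶠ t in Filter.atTop, Real.exp (-(lam * t)) * |w T| < ε / 2 :=
      htend.eventually (gt_mem_nhds (show (0:ℝ) < ε / 2 by positivity))
    filter_upwards [hev1, Filter.eventually_ge_atTop T] with t h1 h2
    have h3 := hbound t h2
    rw [hδlam] at h3
    rw [Real.norm_eq_abs]
    linarith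
  have := key.add_const c
  simpa using this

/-- For the directed Laplacian `L̄ = D̄ - W̄ᵀ` of a DAG with a
lone source node `s`, and any diffusion rate `γ > 0`, the DAG diffusion
`x(t) = exp(-γ t L̄) δ_s` converges to the all-ones vector as `t → ∞`. -/
theorem dag_diffusion_converges_to_ones
    (N : ℕ) (W : Matrix (Fin N) (Fin N) ℝ)
    (hnonneg : ∀ i j, 0 ≤ W i j) (hdiag : ∀ i, W i i = 0)
    (hacyclic : ∀ i, ¬ Relation.TransGen (fun a b => 0 < W a b) i i)
    (s : Fin N) (hsource : ∀ j, W j s = 0)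
    (hreach : ∀ i, i ≠ s → Relation.ReflTransGen (fun a b => 0 < W a b) s i)
    (L : Matrix (Fin N) (Fin N) ℝ)
    (hL : L = Matrix.diagonal (fun i => ∑ j, W j i) - Wᵀ)
    (γ : ℝ) (hγ : 0 < γ) :
    Filter.Tendsto
      (fun t : ℝ => (NormedSpace.exp ((-(γ * t)) • L)) *ᵥ Pi.single s (1 : ℝ))
      Filter.atTop (nhds fun _ => (1 : ℝ)) := by
  classical
  letI : SeminormedRing (Matrix (Fin N) (Fin N) ℝ) := Matrix.linftyOpSemiNormedRing
  letI : NormedRing (Matrix (Fin N) (Fin N) ℝ) := Matrix.linftyOpNormedRing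
  letI : NormedAlgebra ℝ (Matrix (Fin N) (Fin N) ℝ) := Matrix.linftyOpNormedAlgebra
  set B : Matrix (Fin N) (Fin N) ℝ := (-γ) • L with hB
  set y : ℝ → Fin N → ℝ := fun t => (NormedSpace.exp (t • B)) *ᵥ Pi.single s 1 with hy
  have hfun : (fun t : ℝ => (NormedSpace.exp ((-(γ * t)) • L)) *ᵥ Pi.single s (1:ℝ)) = y := by
    funext t
    have h : (-(γ * t)) • L = t • B := by
      rw [hB, smul_smul]; congr 1; ring
    rw [h]
  -- entries of B
  have hBij : ∀ i j, B i j = -γ * ((if i = j then (∑ k, W k i) else 0) - W j i) := by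
    intro i j
    rw [hB, hL]
    simp [Matrix.smul_apply, Matrix.sub_apply, Matrix.diagonal_apply, Matrix.transpose_apply]
  -- derivative of components
  have hderiv : ∀ (i : Fin N) (t : ℝ), HasDerivAt (fun u => y u i) (∑ j, B i j * y t j) t := by
    intro i t
    have h1 : HasDerivAt (fun u : ℝ => NormedSpace.exp (u • B))
        (B * NormedSpace.exp (t • B)) t := hasDerivAt_exp_smul_const' B t
    let φ : Matrix (Fin N) (Fin N) ℝ →ₗ[ℝ] ℝ :=
      { toFun := fun M => (M *ᵥ Pi.single s 1) i
        map_add' := by intro M M'; simp [Matrix.add_mulVec]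
        map_smul' := by intro c M; simp [Matrix.smul_mulVec] }
    have h2 := ((LinearMap.toContinuousLinearMap φ).hasFDerivAt
      (x := NormedSpace.exp (t • B))).comp_hasDerivAt t h1
    have hys : ∀ (u : ℝ) (j : Fin N), y u j = NormedSpace.exp (u • B) j s := by
      intro u j
      rw [hy]
      simp [Matrix.mulVec_single]
    have h4 : (B * NormedSpace.exp (t • B)) i s = ∑ j, B i j * y t j :=
      (Matrix.mul_apply).trans (Finset.sum_congr rfl fun j _ => by rw [hys])
    have h5 : (fun u => y u i) = fun u => NormedSpace.exp (u • B) i s :=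
      funext fun u => hys u i
    rw [h5, ← h4]
    have h3 : (LinearMap.toContinuousLinearMap φ) (B * NormedSpace.exp (t • B))
        = (B * NormedSpace.exp (t • B)) i s := by simp [φ, Matrix.mulVec_single]
    have hf : ⇑(LinearMap.toContinuousLinearMap φ) ∘ (fun u : ℝ => NormedSpace.exp (u • B))
        = fun u => NormedSpace.exp (u • B) i s := by
      funext u; simp [φ, Matrix.mulVec_single]
    rw [← h3, ← hf]
    exact h2
  -- derivative restated
  have hderiv' : ∀ (i : Fin N) (t : ℝ), HasDerivAt (fun u => y u i)
      (-(γ * ∑ j, W j i) * y t i + γ * ∑ j, W j i * y t j) t := by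
    intro i t
    have hsum : ∑ j, B i j * y t j
        = -(γ * ∑ j, W j i) * y t i + γ * ∑ j, W j i * y t j := by
      have hterm : ∀ j, B i j * y t j
          = (if i = j then (-(γ * ∑ k, W k i)) * y t j else 0) + γ * (W j i * y t j) := by
        intro j
        rw [hBij]
        split <;> ring
      rw [Finset.sum_congr rfl fun j _ => hterm j, Finset.sum_add_distrib,
        Finset.sum_ite_eq Finset.univ i fun j => (-(γ * ∑ k, W k i)) * y t j]
      simp [Finset.mul_sum]
    rw [← hsum]
    exact hderiv i t
  -- well-foundedness
  have hwf : WellFounded (fun a b : Fin N => 0 < W a b) := by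
    haveI h1 : IsTrans (Fin N) (Relation.TransGen fun a b => 0 < W a b) := inferInstance
    haveI h2 : IsIrrefl (Fin N) (Relation.TransGen fun a b => 0 < W a b) := ⟨hacyclic⟩
    refine Subrelation.wf (r := Relation.TransGen fun a b : Fin N => 0 < W a b)
      (q := fun a b : Fin N => 0 < W a b) ?_
      (Finite.wellFounded_of_trans_of_irrefl (Relation.TransGen fun a b => 0 < W a b))
    intro x y h
    exact Relation.TransGen.single h
  -- main induction
  have main : ∀ i, Filter.Tendsto (fun t => y t i) Filter.atTop (nhds 1) := by
    intro i
    refine WellFounded.induction (C := fun i => Filter.Tendsto (fun t => y t i) Filter.atTop (nhds 1)) hwf i ?_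
    intro i IH
    by_cases his : i = s
    · rw [his]
      have hBs : ∀ j, B s j = 0 := by
        intro j
        rw [hBij]
        have hds : (∑ k, W k s) = 0 := Finset.sum_eq_zero fun k _ => hsource k
        rcases eq_or_ne s j with h | h
        · subst h; simp [hds, hsource s]
        · simp [h, hsource j]
      have hzero : ∀ t, HasDerivAt (fun u => y u s) 0 t := by
        intro t
        have := hderiv s t
        simpa [hBs] using this
      have hconst : ∀ t, y t s = 1 := by
        intro t
        have hdiff : Differentiable ℝ (fun u => y u s) := fun u => (hzero u).differentiableAt
        have h1 : y t s = y 0 s :=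
          is_const_of_deriv_eq_zero hdiff (fun x => (hzero x).deriv) t 0
        rw [h1, hy]
        simp
      simpa [hconst] using (tendsto_const_nhds : Filter.Tendsto (fun _ : ℝ => (1:ℝ)) _ _)
    · have hdpos : 0 < ∑ j, W j i := by
        rcases (Relation.ReflTransGen.cases_tail (hreach i his)) with h | ⟨c, _, hc⟩
        · exact absurd h his
        · exact Finset.sum_pos' (fun k _ => hnonneg k i) ⟨c, Finset.mem_univ c, hc⟩
      apply ode_tendsto (γ * ∑ j, W j i) 1 (by positivity) _
        (fun t => γ * ∑ j, W j i * y t j) (fun t => hderiv' i t)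
      have hsum : Filter.Tendsto (fun t => ∑ j, W j i * y t j) Filter.atTop
          (nhds (∑ j, W j i)) := by
        have : ∀ j : Fin N, j ∈ Finset.univ →
            Filter.Tendsto (fun t => W j i * y t j) Filter.atTop (nhds (W j i)) := by
          intro j _
          by_cases h : 0 < W j i
          · simpa using (IH j h).const_mul (W j i)
          · have hz : W j i = 0 := le_antisymm (not_lt.mp h) (hnonneg j i)
            simp [hz]
        simpa using tendsto_finset_sum Finset.univ this
      simpa [mul_one] using hsum.const_mul γ
  rw [hfun, tendsto_pi_nhds]
  exact main
end

section
/- Let L and Q be real symmetric N×N matrices such that: (i) L_{i,j} ≤ 0 and Q_{i,j} ≤ 0 for all i ≠ j; (ii) for every i ≠ j, not both L_{i,j} and Q_{i,j} are nonzero; (iii) L has zero row sums, i.e., L_{i,i} = −Σ_{j≠i} L_{i,j} for all i; and (iv) Q_{i,i} − Σ_{j≠i} Q_{i,j} > 0 for all i. Let ε ≥ 0 and set μ = min_i ε / (Q_{i,i} − Σ_{j≠i} Q_{i,j}). Then for A = L − μQ + εI, every Gershgorin disc left-end is nonnegative: A_{i,i} − Σ_{j≠i} |A_{i,j}| ≥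 0 for all i. Consequently A is positive semi-definite. -/
open Matrix Finset

/-- A real symmetric matrix with all Gershgorin left-ends nonnegative is PSD. -/
lemma psd_of_leftends {N : ℕ} {A : Matrix (Fin N) (Fin N) ℝ} (hsymm : A.IsHermitian)
    (h : ∀ i, 0 ≤ A i i - ∑ j ∈ Finset.univ.erase i, |A i j|) : A.PosSemidef := by
  apply hsymm.posSemidef_iff_eigenvalues_nonneg.mpr
  intro i
  have hev : Module.End.HasEigenvalue (Matrix.toLin' A) (hsymm.eigenvalues i) := by
    have hv : Matrix.toLin' A ⇑(hsymm.eigenvectorBasis i)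
        = hsymm.eigenvalues i • ⇑(hsymm.eigenvectorBasis i) := by
      rw [Matrix.toLin'_apply]
      exact hsymm.mulVec_eigenvectorBasis i
    have hnz : ⇑(hsymm.eigenvectorBasis i) ≠ 0 := by
      intro hc
      have hb := hsymm.eigenvectorBasis.toBasis.ne_zero i
      simp only [OrthonormalBasis.coe_toBasis] at hb
      exact hb (by ext j; exact congrFun hc j)
    exact Module.End.hasEigenvalue_of_hasEigenvector
      ⟨Module.End.mem_eigenspace_iff.mpr hv, hnz⟩
  obtain ⟨k, hk⟩ := eigenvalue_mem_ball hev
  rw [Metric.mem_closedBall, Real.dist_eq] at hk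
  have h2 := abs_le.mp hk
  have := h k
  simp only [Real.norm_eq_abs] at hk h2
  simp only [Pi.zero_apply]; linarith [h2.1, h k]

/-- Let `L` and `Q` be real symmetric matrices with
nonpositive off-diagonal entries that are never simultaneously nonzero
off-diagonal, `L` having zero row sums, and `Q_{i,i} - ∑_{j≠i} Q_{i,j} > 0`
for every row `i`.  For `ε ≥ 0` and `μ = min_i ε / (Q_{i,i} - ∑_{j≠i} Q_{i,j})`,
the matrix `A = L - μQ + εI` has all Gershgorin disc left-ends nonnegative,
and consequently `A` is positive semi-definite. -/
theorem gershgorin_leftends_nonneg_and_psd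
    (N : ℕ) (hN : 0 < N) (L Q : Matrix (Fin N) (Fin N) ℝ)
    (hLsymm : L.IsSymm) (hQsymm : Q.IsSymm)
    (hLoff : ∀ i j, i ≠ j → L i j ≤ 0)
    (hQoff : ∀ i j, i ≠ j → Q i j ≤ 0)
    (hdisj : ∀ i j, i ≠ j → L i j = 0 ∨ Q i j = 0)
    (hLrow : ∀ i, L i i = -∑ j ∈ Finset.univ.erase i, L i j)
    (hQpos : ∀ i, 0 < Q i i - ∑ j ∈ Finset.univ.erase i, Q i j)
    (ε : ℝ) (hε : 0 ≤ ε)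
    (μ : ℝ)
    (hμ : μ = Finset.univ.inf' ⟨⟨0, hN⟩, Finset.mem_univ _⟩
        (fun i => ε / (Q i i - ∑ j ∈ Finset.univ.erase i, Q i j)))
    (A : Matrix (Fin N) (Fin N) ℝ)
    (hA : A = L - μ • Q + ε • (1 : Matrix (Fin N) (Fin N) ℝ)) :
    (∀ i, 0 ≤ A i i - ∑ j ∈ Finset.univ.erase i, |A i j|) ∧ A.PosSemidef := by
  have hμnonneg : 0 ≤ μ := by
    rw [hμ]; apply Finset.le_inf'
    intro i _
    exact div_nonneg hε (hQpos i).le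
  have hμle : ∀ i, μ * (Q i i - ∑ j ∈ Finset.univ.erase i, Q i j) ≤ ε := by
    intro i
    have h1 : μ ≤ ε / (Q i i - ∑ j ∈ Finset.univ.erase i, Q i j) := by
      rw [hμ]; exact Finset.inf'_le _ (Finset.mem_univ i)
    calc μ * (Q i i - ∑ j ∈ Finset.univ.erase i, Q i j)
        ≤ (ε / (Q i i - ∑ j ∈ Finset.univ.erase i, Q i j)) *
          (Q i i - ∑ j ∈ Finset.univ.erase i, Q i j) := by
          apply mul_le_mul_of_nonneg_right h1 (hQpos i).le
      _ = ε := div_mul_cancel₀ _ (hQpos i).ne'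
  have key : ∀ i, 0 ≤ A i i - ∑ j ∈ Finset.univ.erase i, |A i j| := by
    intro i
    have hAoff : ∀ j ∈ Finset.univ.erase i, |A i j| = -(L i j) + μ * (-(Q i j)) := by
      intro j hj
      have hij : i ≠ j := (Finset.ne_of_mem_erase hj).symm
      have hAij : A i j = L i j - μ * Q i j := by
        simp [hA, Matrix.one_apply_ne hij]
      rcases hdisj i j hij with h0 | h0
      · rw [hAij, h0, abs_of_nonneg]
        · ring
        · have := hQoff i j hij; nlinarith
      · rw [hAij, h0, mul_zero, sub_zero, abs_of_nonpos (hLoff i j hij)]; ring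
    have hsum : ∑ j ∈ Finset.univ.erase i, |A i j|
        = -(∑ j ∈ Finset.univ.erase i, L i j) + μ * (-(∑ j ∈ Finset.univ.erase i, Q i j)) := by
      rw [Finset.sum_congr rfl hAoff]
      rw [Finset.sum_add_distrib, ← Finset.sum_neg_distrib, ← Finset.mul_sum,
        ← Finset.sum_neg_distrib]
    have hAii : A i i = L i i - μ * Q i i + ε := by
      simp [hA, Matrix.one_apply_eq]
    rw [hAii, hsum, hLrow i]
    have := hμle i
    nlinarith
  refine ⟨key, psd_of_leftends ?_ key⟩
  rw [Matrix.IsHermitian, hA]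
  show (L - μ • Q + ε • 1)ᵀ.map _ = _
  rw [Matrix.transpose_add, Matrix.transpose_sub, Matrix.transpose_smul, Matrix.transpose_smul,
    hLsymm, hQsymm, Matrix.transpose_one]
  ext i j
  simp [Matrix.conjTranspose]
end
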